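/- Suppose h, k, X are real with k ∈ (0,1), 0 ≤ X ≤ 1, and X = dn²(v,k) where h = sn(3v,k), sn(v,k) ≥ 0, cn(v,k) ≥ 0 (with nonvanishing denominators in the triplication formulas). Then h·k·(k⁴ + k²(−4X³+6X²−2) + (1−X)³(3X+1)) + (k⁴(1−4X) + k²(−6X²+8X−2) + (1−X)⁴)·√(1−X) = 0. -/

import Mathlib

/-- Theorem 1 of the paper: with `X = dn²(v,k)` and `h = sn(3v,k)` (given via the
Jacobi addition formulas), equation (29) holds. -/
theorem theorem_one (k v s c d X s2 c2 d2 h : ℝ) (hk0 : 0 < k) (hk1 : k < 1)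
    (hX0 : 0 ≤ X) (hX1 : X ≤ 1) (hXd : X = d ^ 2)
    (h1 : s ^ 2 + c ^ 2 = 1) (h2 : k ^ 2 * s ^ 2 + d ^ 2 = 1)
    (hs : 0 ≤ s) (hc : 0 ≤ c)
    (hD2 : 1 - k ^ 2 * s ^ 4 ≠ 0)
    (hs2 : s2 = 2 * s * c * d / (1 - k ^ 2 * s ^ 4))
    (hc2 : c2 = (c ^ 2 - s ^ 2 * d ^ 2) / (1 - k ^ 2 * s ^ 4))
    (hd2 : d2 = (d ^ 2 - k ^ 2 * s ^ 2 * c ^ 2) / (1 - k ^ 2 * s ^ 4))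
    (hD3 : 1 - k ^ 2 * s ^ 2 * s2 ^ 2 ≠ 0)
    (hh : h = (s * c2 * d2 + s2 * c * d) / (1 - k ^ 2 * s ^ 2 * s2 ^ 2)) :
    h * k * (k ^ 4 + k ^ 2 * (-4 * X ^ 3 + 6 * X ^ 2 - 2) + (1 - X) ^ 3 * (3 * X + 1))
      + (k ^ 4 * (1 - 4 * X) + k ^ 2 * (-6 * X ^ 2 + 8 * X - 2) + (1 - X) ^ 4)
        * Real.sqrt (1 - X) = 0 := by
  have hsqrt : Real.sqrt (1 - X) = k * s := by
    have hx : 1 - X = (k * s) ^ 2 := by rw [hXd]; nlinarith [h2]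
    rw [hx, Real.sqrt_sq (by positivity)]
  have hE : (1 - k^2*s^4)^2 - 4*k^2*s^4*c^2*d^2 ≠ 0 := by
    have heq : (1 - k^2*s^4)^2 - 4*k^2*s^4*c^2*d^2
        = (1 - k ^ 2 * s ^ 2 * s2 ^ 2) * (1 - k^2*s^4)^2 := by
      rw [hs2]; field_simp; ring
    rw [heq]
    exact mul_ne_zero hD3 (pow_ne_zero _ hD2)
  have hNum : h * ((1 - k^2*s^4)^2 - 4*k^2*s^4*c^2*d^2)
      = s * (c^2 - s^2*d^2) * (d^2 - k^2*s^2*c^2) + 2*s*c^2*d^2*(1 - k^2*s^4) := by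
    have heq : (1 - k^2*s^4)^2 - 4*k^2*s^4*c^2*d^2
        = (1 - k ^ 2 * s ^ 2 * s2 ^ 2) * (1 - k^2*s^4)^2 := by
      rw [hs2]; field_simp; ring
    have e1 : h * (1 - k ^ 2 * s ^ 2 * s2 ^ 2) = s * c2 * d2 + s2 * c * d := by
      rw [hh]; exact div_mul_cancel₀ _ hD3
    calc h * ((1 - k^2*s^4)^2 - 4*k^2*s^4*c^2*d^2)
        = (h * (1 - k ^ 2 * s ^ 2 * s2 ^ 2)) * (1 - k^2*s^4)^2 := by rw [heq]; ring
      _ = (s * c2 * d2 + s2 * c * d) * (1 - k^2*s^4)^2 := by rw [e1]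
      _ = _ := by
        have hD2' : 1 - s ^ 4 * k ^ 2 ≠ 0 := by rw [mul_comm]; exact hD2
        rw [hs2, hc2, hd2]; field_simp
  rw [hXd] at hsqrt
  rw [hXd, hsqrt]
  have key : (h * k * (k ^ 4 + k ^ 2 * (-4 * (d^2) ^ 3 + 6 * (d^2) ^ 2 - 2) + (1 - d^2) ^ 3 * (3 * d^2 + 1))
      + (k ^ 4 * (1 - 4 * d^2) + k ^ 2 * (-6 * (d^2) ^ 2 + 8 * d^2 - 2) + (1 - d^2) ^ 4)
        * (k * s)) * ((1 - k^2*s^4)^2 - 4*k^2*s^4*c^2*d^2) = 0 := by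
    linear_combination (k * (k ^ 4 + k ^ 2 * (-4 * (d^2) ^ 3 + 6 * (d^2) ^ 2 - 2) + (1 - d^2) ^ 3 * (3 * d^2 + 1))) * hNum
      + ((3)*k*s*d^2 + (-18)*k*s*d^6 + (24)*k*s*d^8 + (-9)*k*s*d^10 + (-6)*k^3*s*d^2 + (18)*k^3*s*d^6 + (-12)*k^3*s*d^8 + (-1)*k^3*s^3 + (6)*k^3*s^3*d^4 + (-8)*k^3*s^3*d^6 + (3)*k^3*s^3*d^8 + (-1)*k^3*s^3*c^2 + (6)*k^3*s^3*c^2*d^4 + (-8)*k^3*s^3*c^2*d^6 + (3)*k^3*s^3*c^2*d^8 + (1)*k^3*s^5 + (-5)*k^3*s^5*d^2 + (10)*k^3*s^5*d^4 + (-10)*k^3*s^5*d^6 + (5)*k^3*s^5*d^8 + (-1)*k^3*s^5*d^10 + (3)*k^5*s*d^2 + (2)*k^5*s^3 + (-6)*k^5*s^3*d^4 + (4)*k^5*s^3*d^6 + (2)*k^5*s^3*c^2 + (-6)*k^5*s^3*c^2*d^4 + (4)*k^5*s^3*c^2*d^6 + (-2)*k^5*s^5 + (10)*k^5*s^5*d^2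 + (-26)*k^5*s^5*d^4 + (14)*k^5*s^5*d^6 + (4)*k^5*s^5*d^8 + (-1)*k^7*s^3 + (-1)*k^7*s^3*c^2 + (1)*k^7*s^5 + (-5)*k^7*s^5*d^2 + (16)*k^7*s^5*d^4) * h1 + ((-1)*k*s + (-6)*k*s*d^4 + (16)*k*s*d^6 + (-9)*k*s*d^8 + (3)*k*s^3*d^2 + (4)*k*s^3*d^4 + (-14)*k*s^3*d^6 + (4)*k*s^3*d^8 + (3)*k*s^3*d^10 + (2)*k^3*s + (6)*k^3*s*d^4 + (-12)*k^3*s*d^6 + (-6)*k^3*s^3*d^2 + (-20)*k^3*s^3*d^4 + (22)*k^3*s^3*d^6 + (4)*k^3*s^3*d^8 + (12)*k^3*s^5*d^4 + (-8)*k^3*s^5*d^6 + (-4)*k^3*s^5*d^8 + (1)*k^3*s^7 + (-4)*k^3*s^7*d^2 + (6)*k^3*s^7*d^4 + (-4)*k^3*s^7*d^6 + (1)*k^3*s^7*d^8 + (-1)*k^5*s + (3)*k^5*s^3*d^2 + (16)*k^5*s^3*d^4 + (-12)*k^5*s^5*d^4 + (-2)*k^5*s^7 + (8)*k^5*s^7*d^2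 + (-6)*k^5*s^7*d^4 + (1)*k^7*s^7 + (-4)*k^7*s^7*d^2) * h2
  exact (mul_eq_zero.mp key).resolve_right hE
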